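/- Suppose K is a locally compact, Hausdorff, nonmetrizable topological space. Then either K admits a nonmetrizable compact subspace, or the Banach space C₀(K) admits an uncountable equilateral set. -/
import Mathlib


open scoped ZeroAtInfty
open Set TopologicalSpace

/-- Helper: norm computation for the equilateral family. -/
lemma stmt18_norm_eq_one {K : Type*} [TopologicalSpace K] (f g : C₀(K, ℝ)) (x : K)
    (hfx : f x = 1) (hf : ∀ t, f t ∈ Icc (0:ℝ) 1) (hg : ∀ t, g t ∈ Icc (0:ℝ) 1)
    (hxg : x ∉ tsupport ⇑g) : ‖f - g‖ = 1 := by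
  have hgx : g x = 0 := image_eq_zero_of_notMem_tsupport hxg
  have hval : (f - g) x = 1 := by
    rw [ZeroAtInftyContinuousMap.sub_apply, hfx, hgx, sub_zero]
  refine le_antisymm ?_ ?_
  · rw [← ZeroAtInftyContinuousMap.norm_toBCF_eq_norm]
    refine (BoundedContinuousFunction.norm_le (by norm_num)).2 fun t => ?_
    have h1 := hf t
    have h2 := hg t
    simp only [Icc, mem_setOf_eq] at h1 h2
    show ‖(f - g) t‖ ≤ 1
    rw [ZeroAtInftyContinuousMap.sub_apply, Real.norm_eq_abs, abs_le]
    constructor <;> linarith [h1.1, h1.2, h2.1, h2.2]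
  · calc (1:ℝ) = ‖(f - g) x‖ := by rw [hval]; norm_num
      _ = ‖(f - g).toBCF x‖ := rfl
      _ ≤ ‖(f - g).toBCF‖ := BoundedContinuousFunction.norm_coe_le_norm _ x
      _ = ‖f - g‖ := ZeroAtInftyContinuousMap.norm_toBCF_eq_norm

/- STATEMENT 18: If `K` is a locally compact, Hausdorff, nonmetrizable topological
space, then either `K` admits a nonmetrizable compact subspace, or `C₀(K)` admits an
uncountable equilateral set. -/
theorem stmt18 (K : Type*) [TopologicalSpace K] [LocallyCompactSpace K] [T2Space K]
    (hK : ¬TopologicalSpace.MetrizableSpace K) :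
    (∃ S : Set K, IsCompact S ∧ ¬TopologicalSpace.MetrizableSpace S) ∨
    (∃ N : Set C₀(K, ℝ), ¬N.Countable ∧
      ∃ r > (0 : ℝ), ∀ f ∈ N, ∀ g ∈ N, f ≠ g → ‖f - g‖ = r) := by
  by_cases hcpt : ∃ S : Set K, IsCompact S ∧ ¬TopologicalSpace.MetrizableSpace S
  · exact Or.inl hcpt
  push_neg at hcpt
  have hmet : ∀ S : Set K, IsCompact S → TopologicalSpace.MetrizableSpace S := hcpt
  -- Step A : K is not σ-compact
  have hσ : ¬SigmaCompactSpace K := by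
    intro hsc
    apply hK
    let W := CompactExhaustion.choice K
    have hSC : ∀ n : ℕ, SecondCountableTopology ↥(interior (W (n + 1))) := by
      intro n
      haveI : TopologicalSpace.MetrizableSpace ↥(W (n + 1)) := hmet _ (W.isCompact _)
      haveI : CompactSpace ↥(W (n + 1)) := isCompact_iff_compactSpace.mp (W.isCompact _)
      letI := TopologicalSpace.metrizableSpaceMetric ↥(W (n + 1))
      haveI : SecondCountableTopology ↥(W (n + 1)) := inferInstance
      exact (Topology.IsEmbedding.inclusion (interior_subset : interior (W (n+1)) ⊆ W (n+1))
        ).secondCountableTopology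
    haveI : ∀ n : ℕ, SecondCountableTopology ↥((fun n => interior (W (n+1))) n) := hSC
    haveI : SecondCountableTopology K := by
      refine secondCountableTopology_of_countable_cover
        (U := fun n : ℕ => interior (W (n + 1))) (fun n => isOpen_interior) ?_
      refine eq_univ_of_forall fun x => ?_
      have hx : x ∈ ⋃ n, W n := (W.iUnion_eq) ▸ mem_univ x
      obtain ⟨n, hn⟩ := mem_iUnion.mp hx
      exact mem_iUnion.mpr ⟨n, W.subset_interior_succ n hn⟩
    infer_instance
  -- Step B : construct an uncountable equilateral family via Zorn's lemma
  set S : Set (Set (K × C₀(K, ℝ))) :=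
    {M | (∀ p ∈ M, p.2 p.1 = 1 ∧ (∀ t, p.2 t ∈ Icc (0:ℝ) 1) ∧ HasCompactSupport ⇑p.2) ∧
      ∀ p ∈ M, ∀ q ∈ M, p ≠ q → p.1 ∉ tsupport ⇑q.2 ∨ q.1 ∉ tsupport ⇑p.2} with hS
  obtain ⟨M, hM⟩ : ∃ M, Maximal (· ∈ S) M := by
    apply zorn_subset
    intro c hcS hchain
    refine ⟨⋃₀ c, ⟨?_, ?_⟩, fun s hs => subset_sUnion_of_mem hs⟩
    · rintro p ⟨m, hmc, hpm⟩
      exact (hcS hmc).1 p hpm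
    · rintro p ⟨m, hmc, hpm⟩ q ⟨m', hm'c, hqm'⟩ hpq
      rcases hchain.total hmc hm'c with h | h
      · exact (hcS hm'c).2 p (h hpm) q hqm' hpq
      · exact (hcS hmc).2 p hpm q (h hqm') hpq
  have hMS : M ∈ S := hM.1
  -- M is uncountable
  have hMc : ¬M.Countable := by
    intro hcount
    -- the union of supports is σ-compact, hence not all of K
    obtain ⟨x, hx⟩ : ∃ x : K, x ∉ ⋃ p ∈ M, tsupport ⇑p.2 := by
      by_contra h
      push_neg at h
      apply hσ
      refine ⟨?_⟩
      have : (⋃ p ∈ M, tsupport ⇑p.2) = univ := eq_univ_of_forall h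
      rw [← this]
      exact isSigmaCompact_biUnion hcount fun p hp => ((hMS.1 p hp).2.2).isSigmaCompact
    -- build a bump function at x
    obtain ⟨f, hf1, -, hfc, hf01⟩ :=
      exists_continuous_one_zero_of_isCompact (isCompact_singleton (x := x))
        isClosed_empty (disjoint_empty _)
    set g : C₀(K, ℝ) := { toContinuousMap := f, zero_at_infty' := hfc.is_zero_at_infty } with hg
    have hgf : ⇑g = ⇑f := rfl
    have hgx : g x = 1 := hf1 (mem_singleton x)
    have hins : insert (x, g) M ∈ S := by
      constructor
      · rintro p hp
        rcases hp with rfl | hp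
        · exact ⟨hgx, fun t => hf01 t, by rw [hgf]; exact hfc⟩
        · exact hMS.1 p hp
      · rintro p hp q hq hpq
        have hxnot : ∀ r ∈ M, x ∉ tsupport ⇑r.2 := fun r hr hmem =>
          hx (mem_biUnion hr hmem)
        rcases hp with rfl | hp <;> rcases hq with rfl | hq
        · exact absurd rfl hpq
        · exact Or.inl (hxnot q hq)
        · exact Or.inr (hxnot p hp)
        · exact hMS.2 p hp q hq hpq
    have hsub : insert (x, g) M ⊆ M := hM.2 hins (subset_insert _ _)
    have hxt : x ∈ tsupport ⇑g := subset_tsupport _ (by rw [Function.mem_support, hgx]; norm_num)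
    exact hx (mem_biUnion (hsub (mem_insert _ _)) hxt)
  -- project to the second coordinates
  have hinj : InjOn Prod.snd M := by
    intro p hp q hq hpq2
    by_contra hne
    rcases hMS.2 p hp q hq hne with h | h
    · rw [← hpq2] at h
      exact h (subset_tsupport _ (by rw [Function.mem_support, (hMS.1 p hp).1]; norm_num))
    · rw [hpq2] at h
      exact h (subset_tsupport _ (by rw [Function.mem_support, (hMS.1 q hq).1]; norm_num))
  refine Or.inr ⟨Prod.snd '' M, ?_, 1, one_pos, ?_⟩
  · intro hc
    exact hMc (Set.countable_of_injective_of_countable_image hinj hc)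
  · rintro f ⟨p, hp, rfl⟩ g ⟨q, hq, rfl⟩ hfg
    have hpq : p ≠ q := fun h => hfg (by rw [h])
    obtain ⟨hp1, hp01, -⟩ := hMS.1 p hp
    obtain ⟨hq1, hq01, -⟩ := hMS.1 q hq
    rcases hMS.2 p hp q hq hpq with h | h
    · exact stmt18_norm_eq_one p.2 q.2 p.1 hp1 hp01 hq01 h
    · rw [norm_sub_rev]
      exact stmt18_norm_eq_one q.2 p.2 q.1 hq1 hq01 hp01 h
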